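/- arXiv:2410.21102 — 2 statements merged into one kernel-verified Lean document; each statement's English description precedes it below -/
import Mathlib

section
/- Given any infinite coinfinite set A ⊆ ℕ, there exists a permutation π of ℕ such that π[A] has no asymptotic density, i.e., liminf_n |π[A] ∩ [0,n)|/n < limsup_n |π[A] ∩ [0,n)|/n. -/
open Filter Topology

open scoped Classical in
noncomputable def cnt (A : Set ℕ) (n : ℕ) : ℕ :=
  ((Finset.range n).filter (fun m => m ∈ A)).card

def dens (A : Set ℕ) (r : ℝ) : Prop :=
  Tendsto (fun n => (cnt A n : ℝ) / n) atTop (𝓝 r)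

open scoped Classical

/-- The target set with no density: union of blocks `[4^(2k), 4^(2k+1))`. -/
def Bset : Set ℕ := {n | ∃ k, 4 ^ (2 * k) ≤ n ∧ n < 4 ^ (2 * k + 1)}

lemma pow4_lt {a b : ℕ} (h : a < b) : (4:ℕ) ^ a < 4 ^ b :=
  Nat.pow_lt_pow_right (by norm_num) h

lemma pow4_le_iff {a b : ℕ} : (4:ℕ) ^ a ≤ 4 ^ b ↔ a ≤ b :=
  Nat.pow_le_pow_iff_right (by norm_num)

lemma Bset_infinite : Bset.Infinite := by
  apply Set.infinite_of_injective_forall_mem (f := fun k => (4:ℕ) ^ (2 * k))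
  · intro a b hab
    have := Nat.pow_right_injective (by norm_num : 2 ≤ 4) hab
    omega
  · intro k
    exact ⟨k, le_refl _, pow4_lt (by omega)⟩

lemma Bset_compl_infinite : Bsetᶜ.Infinite := by
  apply Set.infinite_of_injective_forall_mem (f := fun k => (4:ℕ) ^ (2 * k + 1))
  · intro a b hab
    have := Nat.pow_right_injective (by norm_num : 2 ≤ 4) hab
    omega
  · intro k
    simp only [Set.mem_compl_iff, Bset, Set.mem_setOf_eq, not_exists]
    rintro j ⟨h1, h2⟩
    have h1' : 2 * j ≤ 2 * k + 1 := pow4_le_iff.mp h1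
    have h2' : 2 * k + 1 < 2 * j + 1 := by
      by_contra h
      exact absurd (pow4_le_iff.mpr (by omega)) (not_le.mpr h2)
    omega

lemma cnt_lower (k : ℕ) : 3 * 4 ^ (2 * k) ≤ cnt Bset (4 ^ (2 * k + 1)) := by
  have hsub : Finset.Ico (4 ^ (2 * k)) (4 ^ (2 * k + 1)) ⊆
      (Finset.range (4 ^ (2 * k + 1))).filter (fun m => m ∈ Bset) := by
    intro m hm
    simp only [Finset.mem_Ico] at hm
    simp only [Finset.mem_filter, Finset.mem_range]
    exact ⟨hm.2, k, hm.1, hm.2⟩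
  have := Finset.card_le_card hsub
  rw [Nat.card_Ico] at this
  have hle : 4 ^ (2 * k + 1) - 4 ^ (2 * k) = 3 * 4 ^ (2 * k) := by
    rw [pow_succ]; ring_nf; omega
  rw [hle] at this
  exact this

lemma cnt_upper (k : ℕ) : cnt Bset (4 ^ (2 * (k+1))) ≤ 4 ^ (2 * k + 1) := by
  have hsub : (Finset.range (4 ^ (2 * (k+1)))).filter (fun m => m ∈ Bset) ⊆
      Finset.range (4 ^ (2 * k + 1)) := by
    intro m hm
    simp only [Finset.mem_filter, Finset.mem_range] at hm
    obtain ⟨hmlt, j, hj1, hj2⟩ := hm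
    simp only [Finset.mem_range]
    have hj : 2 * j + 1 ≤ 2 * k + 1 := by
      by_contra h
      have : 2 * (k+1) ≤ 2 * j := by omega
      exact absurd hj1 (not_le.mpr (lt_of_lt_of_le hmlt (pow4_le_iff.mpr this)))
    exact lt_of_lt_of_le hj2 (pow4_le_iff.mpr hj)
  have := Finset.card_le_card hsub
  simpa [cnt] using this

lemma exists_perm_image (A : Set ℕ) (hA : A.Infinite) (hA' : Aᶜ.Infinite) :
    ∃ π : Equiv.Perm ℕ, π '' A = Bset := by
  haveI : Infinite A := hA.to_subtype
  haveI : Infinite (Aᶜ : Set ℕ) := hA'.to_subtype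
  haveI : Infinite Bset := Bset_infinite.to_subtype
  haveI : Infinite (Bsetᶜ : Set ℕ) := Bset_compl_infinite.to_subtype
  obtain ⟨e1⟩ : Nonempty (A ≃ Bset) := nonempty_equiv_of_countable
  obtain ⟨e2⟩ : Nonempty ((Aᶜ : Set ℕ) ≃ (Bsetᶜ : Set ℕ)) := nonempty_equiv_of_countable
  refine ⟨(Equiv.Set.sumCompl A).symm.trans ((e1.sumCongr e2).trans (Equiv.Set.sumCompl Bset)),
    ?_⟩
  ext b
  constructor
  · rintro ⟨a, ha, rfl⟩
    simp only [Equiv.trans_apply, Equiv.Set.sumCompl_symm_apply_of_mem ha,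
      Equiv.sumCongr_apply, Sum.map_inl, Equiv.Set.sumCompl_apply_inl]
    exact (e1 ⟨a, ha⟩).2
  · intro hb
    refine ⟨(e1.symm ⟨b, hb⟩ : A), (e1.symm ⟨b, hb⟩).2, ?_⟩
    simp only [Equiv.trans_apply,
      Equiv.Set.sumCompl_symm_apply_of_mem (e1.symm ⟨b, hb⟩).2,
      Equiv.sumCongr_apply]
    simp

theorem stmt3 (A : Set ℕ) (hA : A.Infinite) (hA' : Aᶜ.Infinite) :
    ∃ π : Equiv.Perm ℕ,
      Filter.liminf (fun n => (cnt (π '' A) n : ℝ) / n) atTop <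
      Filter.limsup (fun n => (cnt (π '' A) n : ℝ) / n) atTop := by
  obtain ⟨π, hπ⟩ := exists_perm_image A hA hA'
  refine ⟨π, ?_⟩
  rw [hπ]
  set f : ℕ → ℝ := fun n => (cnt Bset n : ℝ) / n with hf
  have hbd_above : IsBoundedUnder (· ≤ ·) atTop f := by
    refine isBoundedUnder_of ⟨1, fun n => ?_⟩
    rcases Nat.eq_zero_or_pos n with h | h
    · simp [hf, h, cnt]
    · rw [hf]
      apply div_le_one_of_le₀
      · exact_mod_cast (Finset.card_filter_le _ _).trans (by simp [Finset.card_range])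
      · positivity
  have hbd_below : IsBoundedUnder (· ≥ ·) atTop f := by
    refine isBoundedUnder_of ⟨0, fun n => ?_⟩
    positivity
  have hfreq_hi : ∃ᶠ n in atTop, (3/4 : ℝ) ≤ f n := by
    rw [frequently_atTop]
    intro N
    obtain ⟨k, hk⟩ : ∃ k, N ≤ 4 ^ (2 * k + 1) := by
      refine ⟨N, le_trans (Nat.le_of_lt (Nat.lt_pow_self (a := 4) (by norm_num) : N < 4 ^ N)) ?_⟩
      exact pow4_le_iff.mpr (by omega)
    refine ⟨4 ^ (2 * k + 1), hk, ?_⟩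
    have h1 := cnt_lower k
    have hpos : (0:ℝ) < (4:ℝ) ^ (2 * k + 1) := by positivity
    have key : (3/4:ℝ) ≤ (cnt Bset (4 ^ (2 * k + 1)) : ℝ) / ((4 ^ (2 * k + 1) : ℕ) : ℝ) := by
      rw [le_div_iff₀ (by exact_mod_cast hpos)]
      push_cast
      have : (3:ℝ) * 4 ^ (2 * k) ≤ (cnt Bset (4 ^ (2 * k + 1)) : ℝ) := by exact_mod_cast h1
      calc (3/4 : ℝ) * 4 ^ (2 * k + 1) = 3 * 4 ^ (2 * k) := by ring
      _ ≤ _ := this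
    exact key
  have hfreq_lo : ∃ᶠ n in atTop, f n ≤ (1/4 : ℝ) := by
    rw [frequently_atTop]
    intro N
    obtain ⟨k, hk⟩ : ∃ k, N ≤ 4 ^ (2 * (k + 1)) := by
      refine ⟨N, le_trans (Nat.le_of_lt (Nat.lt_pow_self (a := 4) (by norm_num) : N < 4 ^ N)) ?_⟩
      exact pow4_le_iff.mpr (by omega)
    refine ⟨4 ^ (2 * (k+1)), hk, ?_⟩
    have h1 := cnt_upper k
    have hpos : (0:ℝ) < (4:ℝ) ^ (2 * (k+1)) := by positivity
    have key : (cnt Bset (4 ^ (2 * (k+1))) : ℝ) / ((4 ^ (2 * (k+1)) : ℕ) : ℝ) ≤ (1/4:ℝ) := by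
      rw [div_le_iff₀ (by exact_mod_cast hpos)]
      push_cast
      have : (cnt Bset (4 ^ (2 * (k+1))) : ℝ) ≤ 4 ^ (2 * k + 1) := by exact_mod_cast h1
      calc (cnt Bset (4 ^ (2 * (k+1))) : ℝ) ≤ 4 ^ (2 * k + 1) := this
      _ = (1/4 : ℝ) * 4 ^ (2 * (k+1)) := by ring
    exact key
  have h1 : liminf f atTop ≤ 1/4 := liminf_le_of_frequently_le hfreq_lo hbd_below
  have h2 : (3/4 : ℝ) ≤ limsup f atTop := le_limsup_of_frequently_le hfreq_hi hbd_above
  linarith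
end

section
/- Let (I_n) be an interval partition of ℕ with |I_{n+1}| ≥ n · ∑_{i≤n} |I_i|, and let 0 < j < k-1. If A ⊆ ℕ is a (j,k)-set (|A ∩ I_n|/|I_n| ∈ [j/k,(j+1)/k] for almost all n), then the lower density of A is at most (j+1)/k and the upper density of A is at least j/k. -/
open Filter Topology

open scoped Classical in
noncomputable def cntIn (A : Set ℕ) (a b : ℕ) : ℕ :=
  ((Finset.Ico a b).filter (fun m => m ∈ A)).card

open scoped Classical in
lemma cnt_split (A : Set ℕ) {a b : ℕ} (h : a ≤ b) :
    cnt A b = cnt A a + cntIn A a b := by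
  unfold cnt cntIn
  rw [Finset.range_eq_Ico,
    ← Finset.Ico_union_Ico_eq_Ico (Nat.zero_le a) h, Finset.filter_union,
    Finset.card_union_of_disjoint]
  · rw [Finset.range_eq_Ico]
  exact (Finset.Ico_disjoint_Ico_consecutive 0 a b).mono
    (Finset.filter_subset (fun m => m ∈ A) _) (Finset.filter_subset (fun m => m ∈ A) _)

open scoped Classical in
lemma cnt_le (A : Set ℕ) (n : ℕ) : cnt A n ≤ n := by
  unfold cnt
  simpa using Finset.card_filter_le (Finset.range n) (fun m => m ∈ A)

open scoped Classical in
lemma cntIn_le (A : Set ℕ) (a b : ℕ) : cntIn A a b ≤ b - a := by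
  unfold cntIn
  simpa using Finset.card_filter_le (Finset.Ico a b) (fun m => m ∈ A)

theorem stmt7 (e : ℕ → ℕ) (he0 : e 0 = 0) (heM : StrictMono e)
    (hlen : ∀ n : ℕ, n * (∑ i ∈ Finset.range (n + 1), (e (i + 1) - e i)) ≤ e (n + 2) - e (n + 1))
    (j k : ℕ) (hj : 0 < j) (hjk : j + 1 < k) (A : Set ℕ)
    (hA : ∀ᶠ n in atTop,
      (j : ℝ) / k ≤ (cntIn A (e n) (e (n + 1)) : ℝ) / ((e (n + 1) - e n : ℕ) : ℝ) ∧
      (cntIn A (e n) (e (n + 1)) : ℝ) / ((e (n + 1) - e n : ℕ) : ℝ) ≤ ((j : ℝ) + 1) / k) :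
    Filter.liminf (fun n => (cnt A n : ℝ) / n) atTop ≤ ((j : ℝ) + 1) / k ∧
    (j : ℝ) / k ≤ Filter.limsup (fun n => (cnt A n : ℝ) / n) atTop := by
  have hk : (0:ℝ) < k := by exact_mod_cast (by omega : 0 < k)
  have hjk1 : (j:ℝ)/k ≤ 1 := by
    rw [div_le_one hk]
    exact_mod_cast le_of_lt (by omega : j < k)
  -- growth of e
  have growth : ∀ m : ℕ, (m + 1) * e (m + 1) ≤ e (m + 2) := by
    intro m
    have h1 := hlen m
    rw [Finset.sum_range_tsub heM.monotone, he0, Nat.sub_zero] at h1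
    have h2 : e (m + 1) ≤ e (m + 2) := (heM (by omega)).le
    have h3 : (m + 1) * e (m + 1) = m * e (m + 1) + e (m + 1) := by ring
    omega
  obtain ⟨M, hM⟩ := eventually_atTop.mp hA
  -- the key "frequently" estimate
  have key : ∀ ε : ℝ, 0 < ε →
      ∃ᶠ n in atTop, ((cnt A n : ℝ) / n ≤ ((j:ℝ)+1)/k + ε ∧ (j:ℝ)/k - ε ≤ (cnt A n : ℝ) / n) := by
    intro ε hε
    rw [frequently_atTop]
    intro N
    set m := max N (max M ⌈1/ε⌉₊) with hm
    have hmN : N ≤ m := le_max_left _ _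
    have hmM : M ≤ m := le_trans (le_max_left _ _) (le_max_right _ _)
    have hmc : ⌈1/ε⌉₊ ≤ m := le_trans (le_max_right _ _) (le_max_right _ _)
    refine ⟨e (m + 2), le_trans (by omega : N ≤ m + 2) heM.le_apply, ?_⟩
    have hinv : 1 / ((m:ℝ) + 1) ≤ ε := by
      rw [div_le_iff₀ (by positivity)]
      have h1 : (1:ℝ)/ε ≤ ⌈1/ε⌉₊ := Nat.le_ceil _
      have h2 : (⌈1/ε⌉₊ : ℝ) ≤ m := by exact_mod_cast hmc
      rw [div_le_iff₀ hε] at h1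
      nlinarith
    obtain ⟨hAlo, hAhi⟩ := hM (m + 1) (by omega)
    set a := e (m + 1)
    set b := e (m + 2)
    have hab : a ≤ b := (heM (by omega)).le
    have ha_pos : 0 < a := by
      have := heM (show 0 < m + 1 by omega); omega
    have hb_pos : 0 < b := lt_of_lt_of_le ha_pos hab
    have hLR : ((b - a : ℕ) : ℝ) = (b:ℝ) - a := Nat.cast_sub hab
    have haR : (0:ℝ) < a := by exact_mod_cast ha_pos
    have hbR : (0:ℝ) < b := by exact_mod_cast hb_pos
    have hLRpos : (0:ℝ) < (b:ℝ) - a := by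
      have : a < b := heM (by omega)
      have : (a:ℝ) < b := by exact_mod_cast this
      linarith
    have hgrow : ((m:ℝ) + 1) * a ≤ b := by exact_mod_cast growth m
    have hsplit : (cnt A b : ℝ) = cnt A a + cntIn A a b := by exact_mod_cast cnt_split A hab
    have hca : (cnt A a : ℝ) ≤ a := by exact_mod_cast cnt_le A a
    have hca0 : (0:ℝ) ≤ cnt A a := by positivity
    have hcIn0 : (0:ℝ) ≤ cntIn A a b := by positivity
    rw [hLR] at hAlo hAhi
    rw [le_div_iff₀ hLRpos] at hAlo
    rw [div_le_iff₀ hLRpos] at hAhi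
    have hab_div : (a:ℝ)/b ≤ 1/((m:ℝ)+1) := by
      rw [div_le_div_iff₀ hbR (by positivity)]
      nlinarith
    have h2 : (a:ℝ) ≤ ε * b := by
      have := hab_div.trans hinv
      rw [div_le_iff₀ hbR] at this
      linarith
    have hja : (0:ℝ) ≤ ((j:ℝ)+1)/k * a := by positivity
    have hja' : (j:ℝ)/k * a ≤ a := by nlinarith [div_nonneg (Nat.cast_nonneg j) hk.le]
    constructor
    · rw [hsplit, div_le_iff₀ hbR]
      have expand : (((j:ℝ)+1)/k + ε) * b
          = ((j:ℝ)+1)/k * ((b:ℝ) - a) + ((j:ℝ)+1)/k * a + ε * b := by ring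
      linarith
    · rw [hsplit, le_div_iff₀ hbR]
      have expand : ((j:ℝ)/k - ε) * b
          = (j:ℝ)/k * ((b:ℝ) - a) + (j:ℝ)/k * a - ε * b := by ring
      linarith
  -- boundedness
  have hbdd_below : IsBoundedUnder (· ≥ ·) atTop (fun n => (cnt A n : ℝ) / n) :=
    Filter.isBoundedUnder_of ⟨0, fun n => by
      show (0:ℝ) ≤ (cnt A n : ℝ) / n; positivity⟩
  have hbdd_above : IsBoundedUnder (· ≤ ·) atTop (fun n => (cnt A n : ℝ) / n) := by
    refine Filter.isBoundedUnder_of ⟨1, fun n => ?_⟩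
    show (cnt A n : ℝ) / n ≤ 1
    rcases Nat.eq_zero_or_pos n with h | h
    · simp [h]
    · rw [div_le_one (by exact_mod_cast h)]
      exact_mod_cast cnt_le A n
  constructor
  · refine le_of_forall_pos_le_add fun ε hε => ?_
    exact liminf_le_of_frequently_le (((key ε hε).mono fun n h => h.1)) hbdd_below
  · have hlim : ∀ ε : ℝ, 0 < ε → (j:ℝ)/k - ε ≤ Filter.limsup (fun n => (cnt A n : ℝ) / n) atTop := by
      intro ε hε
      exact le_limsup_of_frequently_le (((key ε hε).mono fun n h => h.2)) hbdd_above
    by_contra h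
    push_neg at h
    have := hlim (((j:ℝ)/k - Filter.limsup (fun n => (cnt A n : ℝ) / n) atTop)/2) (by linarith)
    linarith
end
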